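/- Suppose y = Φ x_true + n with ‖n‖₂ ≤ ε, x_true ∈ {0,1}^N binary and s-sparse, and Φ satisfies the BRIP of order 2s with δ_{2s}^b < √2 - 1. Let x* solve the relaxed convex program (minimize ‖x‖₁ subject to ‖Φx - y‖₂ ≤ ε, 0 ≤ x ≤ 1). If ε is small enough that Cε < 1/2 where C = 4√(1+δ_{2s}^b)/(1 - (√2+1)δ_{2s}^b), then entrywise rounding of x* at threshold 1/2 exactly recovers x_true. -/

import Mathlib

noncomputable def l2 {n : ℕ} (x : Fin n → ℝ) : ℝ := Real.sqrt (∑ i, (x i) ^ 2)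
def l1 {n : ℕ} (x : Fin n → ℝ) : ℝ := ∑ i, |x i|

namespace Stmt2Aux

variable {N : ℕ}

lemma l2_nonneg (x : Fin N → ℝ) : 0 ≤ l2 x := Real.sqrt_nonneg _

lemma sq_l2 (x : Fin N → ℝ) : (l2 x) ^ 2 = ∑ i, x i ^ 2 :=
  Real.sq_sqrt (Finset.sum_nonneg fun i _ => sq_nonneg _)

lemma abs_le_l2 (x : Fin N → ℝ) (i : Fin N) : |x i| ≤ l2 x := by
  have h1 : x i ^ 2 ≤ ∑ j, x j ^ 2 :=
    Finset.single_le_sum (fun j _ => sq_nonneg (x j)) (Finset.mem_univ i)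
  calc |x i| = Real.sqrt (x i ^ 2) := (Real.sqrt_sq_eq_abs _).symm
    _ ≤ l2 x := Real.sqrt_le_sqrt h1

lemma l2_zero : l2 (0 : Fin N → ℝ) = 0 := by simp [l2]

lemma l2_eq_zero {x : Fin N → ℝ} (h : l2 x = 0) : x = 0 := by
  funext i
  have := abs_le_l2 x i
  rw [h] at this
  simpa using abs_nonpos_iff.mp this

/-- inner product -/
def ip (u v : Fin N → ℝ) : ℝ := ∑ i, u i * v i

lemma l2sq_add (u v : Fin N → ℝ) :
    (l2 (u + v)) ^ 2 = (l2 u) ^ 2 + 2 * ip u v + (l2 v) ^ 2 := by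
  have e : ∀ i : Fin N, (u i + v i) ^ 2 = u i ^ 2 + 2 * (u i * v i) + v i ^ 2 := fun i => by ring
  simp only [sq_l2, ip, Pi.add_apply, e, Finset.sum_add_distrib, Finset.mul_sum]

lemma abs_ip_le (u v : Fin N → ℝ) : |ip u v| ≤ l2 u * l2 v := by
  have h := Finset.sum_mul_sq_le_sq_mul_sq Finset.univ u v
  calc |ip u v| = Real.sqrt ((ip u v) ^ 2) := (Real.sqrt_sq_eq_abs _).symm
    _ ≤ Real.sqrt ((∑ i, u i ^ 2) * ∑ i, v i ^ 2) := Real.sqrt_le_sqrt h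
    _ = l2 u * l2 v := by
        rw [l2, l2, ← Real.sqrt_mul (Finset.sum_nonneg fun i _ => sq_nonneg _)]

lemma l2_add_le (u v : Fin N → ℝ) : l2 (u + v) ≤ l2 u + l2 v := by
  have h2 : (l2 (u + v)) ^ 2 ≤ (l2 u + l2 v) ^ 2 := by
    rw [l2sq_add]
    have h3 := (abs_le.mp (abs_ip_le u v)).2
    nlinarith
  calc l2 (u + v) = Real.sqrt ((l2 (u + v)) ^ 2) := (Real.sqrt_sq (l2_nonneg _)).symm
    _ ≤ Real.sqrt ((l2 u + l2 v) ^ 2) := Real.sqrt_le_sqrt h2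
    _ = l2 u + l2 v := Real.sqrt_sq (add_nonneg (l2_nonneg u) (l2_nonneg v))

/-- restriction of a vector to a finite index set -/
def rst (A : Finset (Fin N)) (x : Fin N → ℝ) : Fin N → ℝ := fun j => if j ∈ A then x j else 0

lemma sq_l2_rst (A : Finset (Fin N)) (x : Fin N → ℝ) :
    (l2 (rst A x)) ^ 2 = ∑ j ∈ A, x j ^ 2 := by
  rw [sq_l2]
  simp only [rst, apply_ite (· ^ 2), ne_eq, OfNat.ofNat_ne_zero, not_false_eq_true,
    zero_pow]
  rw [Finset.sum_ite_mem, Finset.univ_inter]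

lemma sq_l2_smul (c : ℝ) (x : Fin N → ℝ) : (l2 (c • x)) ^ 2 = c ^ 2 * (l2 x) ^ 2 := by
  simp only [sq_l2, Pi.smul_apply, smul_eq_mul, mul_pow, Finset.mul_sum]

lemma ip_smul_smul (c d : ℝ) (x y : Fin N → ℝ) :
    ip (c • x) (d • y) = (c * d) * ip x y := by
  simp only [ip, Pi.smul_apply, smul_eq_mul, Finset.mul_sum]
  exact Finset.sum_congr rfl fun i _ => by ring

lemma ip_disj {u v : Fin N → ℝ} (h : ∀ j, u j = 0 ∨ v j = 0) : ip u v = 0 :=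
  Finset.sum_eq_zero fun j _ => by rcases h j with h' | h' <;> simp [h']

lemma ip_add_left (u v w : Fin N → ℝ) : ip (u + v) w = ip u w + ip v w := by
  simp only [ip, Pi.add_apply, add_mul, Finset.sum_add_distrib]

lemma ip_add_right (u v w : Fin N → ℝ) : ip u (v + w) = ip u v + ip u w := by
  simp only [ip, Pi.add_apply, mul_add, Finset.sum_add_distrib]

lemma ip_sum_right {ι : Type*} (u : Fin N → ℝ) (t : Finset ι) (f : ι → Fin N → ℝ) :
    ip u (∑ k ∈ t, f k) = ∑ k ∈ t, ip u (f k) := by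
  classical
  induction t using Finset.induction_on with
  | empty => simp [ip]
  | insert _ _ hx ih =>
      rw [Finset.sum_insert hx, Finset.sum_insert hx, ip_add_right, ih]

lemma ip_self (u : Fin N → ℝ) : ip u u = (l2 u) ^ 2 := by
  rw [sq_l2, ip]
  exact Finset.sum_congr rfl fun i _ => (sq (u i)).symm ▸ by ring

lemma rst_union {A B : Finset (Fin N)} (hAB : Disjoint A B) (x : Fin N → ℝ) :
    rst (A ∪ B) x = rst A x + rst B x := by
  funext j
  simp only [rst, Pi.add_apply, Finset.mem_union]
  by_cases hA : j ∈ A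
  · have hB : j ∉ B := Finset.disjoint_left.mp hAB hA
    simp [hA, hB]
  · by_cases hB : j ∈ B <;> simp [hA, hB]

lemma upward_segment {N s : ℕ} (A : Finset (Fin N)) (hcard : A.card = s)
    (hup : ∀ i i' : Fin N, i ∈ A → i ≤ i' → i' ∈ A) :
    ∀ i : Fin N, i ∈ A ↔ N - s ≤ i.val := by
  intro i
  have hiN := i.isLt
  constructor
  · intro hi
    have hsub : Finset.Ici i ⊆ A := fun i' hi' => hup i i' hi (Finset.mem_Ici.mp hi')
    have hle := Finset.card_le_card hsub
    rw [Fin.card_Ici, hcard] at hle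
    omega
  · intro hi
    by_contra hmem
    have hsub : A ⊆ Finset.Ioi i := by
      intro i' hi'
      rw [Finset.mem_Ioi]
      by_contra hle
      push_neg at hle
      exact hmem (hup i' i hi' hle)
    have hle := Finset.card_le_card hsub
    rw [Fin.card_Ioi, hcard] at hle
    omega

lemma cross_bound {M N s : ℕ} (Φ : Matrix (Fin M) (Fin N) ℝ) (δ : ℝ)
    (hBRIP : ∀ v : Fin N → ℝ, Set.ncard (Function.support v) ≤ 2 * s → (∀ i, |v i| ≤ 1) →
      (1 - δ) * (l2 v) ^ 2 ≤ (l2 (Φ.mulVec v)) ^ 2 ∧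
      (l2 (Φ.mulVec v)) ^ 2 ≤ (1 + δ) * (l2 v) ^ 2)
    (u v : Fin N → ℝ) (Au Av : Finset (Fin N))
    (hu : ∀ j, j ∉ Au → u j = 0) (hv : ∀ j, j ∉ Av → v j = 0)
    (hdisj : Disjoint Au Av) (hcard : Au.card + Av.card ≤ 2 * s) :
    |ip (Φ.mulVec u) (Φ.mulVec v)| ≤ δ * (l2 u * l2 v) := by
  by_cases hu0 : u = 0
  · simp [hu0, ip, Matrix.mulVec_zero, l2_zero]
  by_cases hv0 : v = 0
  · simp [hv0, ip, Matrix.mulVec_zero, l2_zero]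
  set a := l2 u with ha_def
  set b := l2 v with hb_def
  have ha : 0 < a := lt_of_le_of_ne (l2_nonneg u) (fun h => hu0 (l2_eq_zero h.symm))
  have hb : 0 < b := lt_of_le_of_ne (l2_nonneg v) (fun h => hv0 (l2_eq_zero h.symm))
  have hipuv : ip u v = 0 := ip_disj fun j => by
    by_cases hj : j ∈ Au
    · exact Or.inr (hv j (Finset.disjoint_left.mp hdisj hj))
    · exact Or.inl (hu j hj)
  -- the two test vectors
  have key : ∀ c : ℝ, c = 1 ∨ c = -1 →
      (1 - δ) * 2 ≤ (l2 (Φ.mulVec (a⁻¹ • u + (c * b⁻¹) • v))) ^ 2 ∧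
      (l2 (Φ.mulVec (a⁻¹ • u + (c * b⁻¹) • v))) ^ 2 ≤ (1 + δ) * 2 := by
    intro c hc
    set w := a⁻¹ • u + (c * b⁻¹) • v with hw
    have hsupp : Set.ncard (Function.support w) ≤ 2 * s := by
      have hsub : Function.support w ⊆ ↑(Au ∪ Av) := by
        intro j hj
        by_contra hmem
        simp only [Finset.coe_union, Set.mem_union, Finset.mem_coe] at hmem
        push_neg at hmem
        apply hj
        simp [hw, hu j hmem.1, hv j hmem.2]
      calc Set.ncard (Function.support w) ≤ Set.ncard ↑(Au ∪ Av) :=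
            Set.ncard_le_ncard hsub (Au ∪ Av).finite_toSet
        _ = (Au ∪ Av).card := Set.ncard_coe_finset _
        _ ≤ Au.card + Av.card := Finset.card_union_le _ _
        _ ≤ 2 * s := hcard
    have hc1 : |c| = 1 := by rcases hc with h | h <;> simp [h]
    have hinf : ∀ i, |w i| ≤ 1 := by
      intro i
      by_cases hi : i ∈ Au
      · have hvi : v i = 0 := hv i (Finset.disjoint_left.mp hdisj hi)
        have : |u i| ≤ a := abs_le_l2 u i
        simp only [hw, Pi.add_apply, Pi.smul_apply, smul_eq_mul, hvi, mul_zero, add_zero]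
        rw [abs_mul, abs_inv, abs_of_pos ha]
        rw [inv_mul_le_iff₀ ha]
        simpa using this
      · have hui : u i = 0 := hu i hi
        simp only [hw, Pi.add_apply, Pi.smul_apply, smul_eq_mul, hui, mul_zero, zero_add]
        by_cases hi' : i ∈ Av
        · have : |v i| ≤ b := abs_le_l2 v i
          rw [abs_mul, abs_mul, hc1, one_mul, abs_inv, abs_of_pos hb]
          rw [inv_mul_le_iff₀ hb]
          simpa using this
        · simp [hv i hi']
    have hl2w : (l2 w) ^ 2 = 2 := by
      rw [hw, l2sq_add, sq_l2_smul, sq_l2_smul, ip_smul_smul, hipuv]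
      rw [← ha_def, ← hb_def]
      rcases hc with rfl | rfl <;> (field_simp; try ring)
    have := hBRIP w hsupp hinf
    rw [hl2w] at this
    exact this
  have expand : ∀ c : ℝ,
      (l2 (Φ.mulVec (a⁻¹ • u + (c * b⁻¹) • v))) ^ 2 =
      a⁻¹ ^ 2 * (l2 (Φ.mulVec u)) ^ 2 + 2 * (a⁻¹ * (c * b⁻¹)) * ip (Φ.mulVec u) (Φ.mulVec v)
        + (c * b⁻¹) ^ 2 * (l2 (Φ.mulVec v)) ^ 2 := by
    intro c
    rw [Matrix.mulVec_add, Matrix.mulVec_smul, Matrix.mulVec_smul, l2sq_add,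
      sq_l2_smul, sq_l2_smul, ip_smul_smul]
    ring
  have h1 := key 1 (Or.inl rfl)
  have h2 := key (-1) (Or.inr rfl)
  rw [expand 1] at h1
  rw [expand (-1)] at h2
  have hab : 0 < a⁻¹ * b⁻¹ := by positivity
  have hineq1 : a⁻¹ * b⁻¹ * ip (Φ.mulVec u) (Φ.mulVec v) ≤ δ := by nlinarith [h1.2, h2.1]
  have hineq2 : -δ ≤ a⁻¹ * b⁻¹ * ip (Φ.mulVec u) (Φ.mulVec v) := by nlinarith [h1.1, h2.2]
  have habs : |a⁻¹ * b⁻¹ * ip (Φ.mulVec u) (Φ.mulVec v)| ≤ δ := abs_le.mpr ⟨hineq2, hineq1⟩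
  have : |ip (Φ.mulVec u) (Φ.mulVec v)| = a * b * |a⁻¹ * b⁻¹ * ip (Φ.mulVec u) (Φ.mulVec v)| := by
    rw [abs_mul, abs_mul, abs_inv, abs_inv, abs_of_pos ha, abs_of_pos hb]
    field_simp
  rw [this]
  calc a * b * |a⁻¹ * b⁻¹ * ip (Φ.mulVec u) (Φ.mulVec v)| ≤ a * b * δ := by
        apply mul_le_mul_of_nonneg_left habs (by positivity)
    _ = δ * (a * b) := by ring

end Stmt2Aux

open Stmt2Aux in
set_option maxHeartbeats 2000000 in
/-- Under the hypotheses of the recovery theorem, if additionally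
`Cε < 1/2` with `C = 4√(1+δ)/(1-(√2+1)δ)`, then rounding `x*` entrywise at
threshold `1/2` exactly recovers `x_true`. -/
theorem stmt2 {M N s : ℕ} (Φ : Matrix (Fin M) (Fin N) ℝ) (y n : Fin M → ℝ)
    (xtrue xstar : Fin N → ℝ) (ε δ C : ℝ)
    (hy : y = Φ.mulVec xtrue + n) (hn : l2 n ≤ ε)
    (hbin : ∀ j, xtrue j = 0 ∨ xtrue j = 1)
    (hs : Set.ncard (Function.support xtrue) = s)
    (hδ : δ < Real.sqrt 2 - 1)
    (hBRIP : ∀ v : Fin N → ℝ, Set.ncard (Function.support v) ≤ 2 * s → (∀ i, |v i| ≤ 1) →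
      (1 - δ) * (l2 v) ^ 2 ≤ (l2 (Φ.mulVec v)) ^ 2 ∧
      (l2 (Φ.mulVec v)) ^ 2 ≤ (1 + δ) * (l2 v) ^ 2)
    (hfeas : l2 (Φ.mulVec xstar - y) ≤ ε ∧ ∀ j, 0 ≤ xstar j ∧ xstar j ≤ 1)
    (hopt : ∀ x : Fin N → ℝ, (l2 (Φ.mulVec x - y) ≤ ε ∧ ∀ j, 0 ≤ x j ∧ x j ≤ 1) →
      l1 xstar ≤ l1 x)
    (hC : C = 4 * Real.sqrt (1 + δ) / (1 - (Real.sqrt 2 + 1) * δ))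
    (hthresh : C * ε < 1 / 2) :
    (fun j => if 1 / 2 < xstar j then (1 : ℝ) else 0) = xtrue := by
  classical
  have hε : 0 ≤ ε := le_trans (l2_nonneg n) hn
  have hsuppfin : (Function.support xtrue).Finite := Set.toFinite _
  by_cases hs0 : s = 0
  · -- degenerate case: xtrue = 0
    subst hs0
    have hxt : xtrue = 0 := by
      have hemp : Function.support xtrue = ∅ := (Set.ncard_eq_zero hsuppfin).mp hs
      exact Function.support_eq_empty_iff.mp hemp
    have hyn : y = n := by rw [hy, hxt]; simp [Matrix.mulVec_zero]
    have hfeas0 : l2 (Φ.mulVec (0 : Fin N → ℝ) - y) ≤ ε ∧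
        ∀ j, 0 ≤ (0 : Fin N → ℝ) j ∧ (0 : Fin N → ℝ) j ≤ 1 := by
      constructor
      · have heq : Φ.mulVec (0 : Fin N → ℝ) - y = fun i => -(n i) := by
          funext i; simp [Matrix.mulVec_zero, hyn]
        rw [heq]
        have heq2 : l2 (fun i => -(n i)) = l2 n := by
          unfold l2; congr 1; exact Finset.sum_congr rfl fun i _ => by ring
        rw [heq2]; exact hn
      · intro j; norm_num
    have hl1 : l1 xstar ≤ 0 := by simpa [l1] using hopt 0 hfeas0
    have hzero : ∀ j, xstar j = 0 := by
      have hnn : ∀ j ∈ Finset.univ, (0:ℝ) ≤ |xstar j| := fun j _ => abs_nonneg _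
      have hz := (Finset.sum_eq_zero_iff_of_nonneg hnn).mp
        (le_antisymm hl1 (Finset.sum_nonneg hnn))
      intro j
      simpa using abs_eq_zero.mp (hz j (Finset.mem_univ j))
    funext j
    rw [hxt, hzero j]
    norm_num
  -- main case: s ≥ 1
  have hs1 : 1 ≤ s := Nat.one_le_iff_ne_zero.mpr hs0
  set h : Fin N → ℝ := xstar - xtrue with hh
  set T0 : Finset (Fin N) := hsuppfin.toFinset with hT0def
  have hT0card : T0.card = s := by
    rw [← hs]
    exact (Set.ncard_eq_toFinset_card _ hsuppfin).symm
  have hmemT0 : ∀ j, j ∈ T0 ↔ xtrue j = 1 := by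
    intro j
    rw [hT0def, Set.Finite.mem_toFinset, Function.mem_support]
    rcases hbin j with h0 | h0 <;> simp [h0]
  have hnotT0 : ∀ j, j ∉ T0 → xtrue j = 0 := fun j hj => by
    rcases hbin j with h0 | h1
    · exact h0
    · exact absurd ((hmemT0 j).mpr h1) hj
  have hhT0 : ∀ j ∈ T0, -1 ≤ h j ∧ h j ≤ 0 := by
    intro j hj
    have h1 := (hmemT0 j).mp hj
    have h2 := hfeas.2 j
    constructor <;> simp only [hh, Pi.sub_apply, h1] <;> linarith [h2.1, h2.2]
  have hhco : ∀ j, j ∉ T0 → h j = xstar j ∧ 0 ≤ h j ∧ h j ≤ 1 := by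
    intro j hj
    have h1 := hnotT0 j hj
    have h2 := hfeas.2 j
    refine ⟨?_, ?_, ?_⟩ <;> simp only [hh, Pi.sub_apply, h1] <;> linarith [h2.1, h2.2]
  have habs1 : ∀ j, |h j| ≤ 1 := by
    intro j
    by_cases hj : j ∈ T0
    · have := hhT0 j hj; rw [abs_le]; constructor <;> linarith [this.1, this.2]
    · have := hhco j hj; rw [abs_le]; constructor <;> linarith [this.2.1, this.2.2]
  have hT0ne : T0.Nonempty := Finset.card_pos.mp (by omega)
  obtain ⟨j0, hj0⟩ := hT0ne
  have hδ0 : 0 ≤ δ := by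
    have hsupp : Set.ncard (Function.support (fun j => if j = j0 then (1:ℝ) else 0)) ≤ 2*s := by
      have hsub : Function.support (fun j => if j = j0 then (1:ℝ) else 0) ⊆ {j0} := by
        intro j hj
        by_contra hne
        simp only [Set.mem_singleton_iff] at hne
        exact hj (by simp [hne])
      calc Set.ncard (Function.support (fun j => if j = j0 then (1:ℝ) else 0))
          ≤ Set.ncard ({j0} : Set (Fin N)) := Set.ncard_le_ncard hsub (Set.finite_singleton _)
        _ = 1 := Set.ncard_singleton _
        _ ≤ 2*s := by omega
    have hinf : ∀ i, |(fun j => if j = j0 then (1:ℝ) else 0) i| ≤ 1 := fun i => by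
      by_cases hi : i = j0 <;> simp [hi]
    have hl2v : (l2 (fun j => if j = j0 then (1:ℝ) else 0))^2 = 1 := by
      rw [sq_l2]
      have : ∀ j : Fin N, (if j = j0 then (1:ℝ) else 0)^2 = if j = j0 then 1 else 0 := by
        intro j; by_cases hj : j = j0 <;> simp [hj]
      simp [this]
    have hb := hBRIP _ hsupp hinf
    rw [hl2v] at hb
    nlinarith [hb.1, hb.2]
  have hsqrt2 : (1:ℝ) ≤ Real.sqrt 2 := by
    rw [show (1:ℝ) = Real.sqrt 1 from (Real.sqrt_one).symm]
    exact Real.sqrt_le_sqrt (by norm_num)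
  have hsq2 : Real.sqrt 2 ^ 2 = 2 := Real.sq_sqrt (by norm_num)
  have hDpos : 0 < 1 - (Real.sqrt 2 + 1) * δ := by nlinarith
  have hCpos : 0 < C := by
    rw [hC]
    apply div_pos _ hDpos
    have : 0 < Real.sqrt (1+δ) := Real.sqrt_pos.mpr (by linarith)
    linarith
  -- feasibility of xtrue
  have hxtfeas : l2 (Φ.mulVec xtrue - y) ≤ ε := by
    have heq : Φ.mulVec xtrue - y = fun i => -(n i) := by
      rw [hy]; funext i; simp
    rw [heq]
    have heq2 : l2 (fun i => -(n i)) = l2 n := by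
      unfold l2; congr 1; exact Finset.sum_congr rfl fun i _ => by ring
    rw [heq2]; exact hn
  have hxtbnd : ∀ j, 0 ≤ xtrue j ∧ xtrue j ≤ 1 := fun j => by
    rcases hbin j with h0 | h0 <;> simp [h0]
  have hl1xt : l1 xtrue = (s:ℝ) := by
    unfold l1
    have he : ∀ j, |xtrue j| = if j ∈ T0 then (1:ℝ) else 0 := by
      intro j
      by_cases hj : j ∈ T0
      · simp [hj, (hmemT0 j).mp hj]
      · simp [hj, hnotT0 j hj]
    simp only [he]
    rw [Finset.sum_ite_mem, Finset.univ_inter, Finset.sum_const, hT0card]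
    simp
  have hl1star : l1 xstar ≤ (s:ℝ) := by
    have := hopt xtrue ⟨hxtfeas, hxtbnd⟩
    linarith [hl1xt ▸ this]
  -- cone condition
  have hcone : ∑ j ∈ T0ᶜ, |h j| ≤ ∑ j ∈ T0, |h j| := by
    have e1 : ∑ j ∈ T0ᶜ, |h j| = ∑ j ∈ T0ᶜ, xstar j := by
      refine Finset.sum_congr rfl fun j hj => ?_
      have hc := hhco j (Finset.mem_compl.mp hj)
      rw [abs_of_nonneg hc.2.1, hc.1]
    have e2 : ∑ j ∈ T0, |h j| = ∑ j ∈ T0, (1 - xstar j) := by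
      refine Finset.sum_congr rfl fun j hj => ?_
      have h1 := (hmemT0 j).mp hj
      have h2 := hhT0 j hj
      rw [abs_of_nonpos h2.2]
      simp only [hh, Pi.sub_apply, h1]
      ring
    have e3 : ∑ j ∈ T0, xstar j + ∑ j ∈ T0ᶜ, xstar j = l1 xstar := by
      unfold l1
      rw [Finset.sum_add_sum_compl]
      exact Finset.sum_congr rfl fun j _ => (abs_of_nonneg (hfeas.2 j).1).symm
    have e4 : ∑ j ∈ T0, (1:ℝ) = (s:ℝ) := by rw [Finset.sum_const, hT0card]; simp
    rw [e1, e2, Finset.sum_sub_distrib, e4]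
    linarith
  -- ===== sorting machinery =====
  set f : Fin N → ℝ := fun j => if j ∈ T0 then 2 else -(h j) with hf
  set σ := Tuple.sort f with hσ
  have hmono : Monotone (f ∘ σ) := Tuple.monotone_sort f
  have hfle : ∀ j, f j ≤ 2 := by
    intro j
    by_cases hj : j ∈ T0 <;> simp only [hf, hj, if_true, if_false, le_refl]
    have := abs_le.mp (habs1 j)
    linarith [this.1]
  have hf2 : ∀ j, f j = 2 ↔ j ∈ T0 := by
    intro j
    by_cases hj : j ∈ T0
    · simp [hf, hj]
    · simp only [hf, hj, if_false, iff_false]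
      intro habs
      have := abs_le.mp (habs1 j)
      linarith [this.1]
  have hA : ∀ i : Fin N, σ i ∈ T0 ↔ N - s ≤ i.val := by
    have hAcard : (Finset.univ.filter (fun i => σ i ∈ T0)).card = s := by
      rw [← hT0card]
      apply Finset.card_bij (fun i _ => σ i)
      · intro i hi; exact (Finset.mem_filter.mp hi).2
      · intro i hi i' hi' hii; exact σ.injective hii
      · intro j hj
        refine ⟨σ.symm j, ?_, ?_⟩
        · exact Finset.mem_filter.mpr ⟨Finset.mem_univ _, by rwa [Equiv.apply_symm_apply]⟩
        · exact Equiv.apply_symm_apply σ j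
    have hup : ∀ i i' : Fin N, i ∈ Finset.univ.filter (fun i => σ i ∈ T0) → i ≤ i' →
        i' ∈ Finset.univ.filter (fun i => σ i ∈ T0) := by
      intro i i' hi hle
      simp only [Finset.mem_filter, Finset.mem_univ, true_and] at hi ⊢
      have h1 : f (σ i) ≤ f (σ i') := hmono hle
      rw [(hf2 _).mpr hi] at h1
      exact (hf2 _).mp (le_antisymm (hfle _) h1)
    intro i
    have := upward_segment _ hAcard hup i
    simpa using this
  set pos : Fin N → ℕ := fun j => (σ.symm j).val with hpos
  have hposT0 : ∀ j, j ∈ T0 ↔ N - s ≤ pos j := by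
    intro j
    have := hA (σ.symm j)
    rwa [Equiv.apply_symm_apply] at this
  have hposlt : ∀ j, j ∉ T0 → pos j < N - s := by
    intro j hj
    by_contra hge
    push_neg at hge
    exact hj ((hposT0 j).mpr hge)
  have hsorted : ∀ j j', j ∉ T0 → j' ∉ T0 → pos j ≤ pos j' → h j' ≤ h j := by
    intro j j' hj hj' hle
    have hm := hmono (show σ.symm j ≤ σ.symm j' from hle)
    simp only [Function.comp_apply, Equiv.apply_symm_apply] at hm
    simp only [hf, hj, hj', if_false] at hm
    linarith
  -- ===== blocks =====
  set B : ℕ → Finset (Fin N) :=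
    fun k => Finset.univ.filter (fun j => j ∉ T0 ∧ k*s ≤ pos j ∧ pos j < (k+1)*s) with hB
  have hmemB : ∀ k j, j ∈ B k ↔ j ∉ T0 ∧ k*s ≤ pos j ∧ pos j < (k+1)*s := by
    intro k j; simp [hB]
  have hBdisj : ∀ k k', k ≠ k' → Disjoint (B k) (B k') := by
    intro k k' hkk
    rw [Finset.disjoint_left]
    intro j hj hj'
    have h1 := (hmemB k j).mp hj
    have h2 := (hmemB k' j).mp hj'
    rcases lt_or_gt_of_ne hkk with hlt | hgt
    · have : (k+1)*s ≤ k'*s := Nat.mul_le_mul_right s hlt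
      omega
    · have : (k'+1)*s ≤ k*s := Nat.mul_le_mul_right s hgt
      omega
  have hposinj : ∀ j j', pos j = pos j' → j = j' := by
    intro j j' hjj
    have : σ.symm j = σ.symm j' := Fin.ext hjj
    exact σ.symm.injective this
  have hcardB : ∀ k, (B k).card ≤ s := by
    intro k
    have hle : (B k).card ≤ (Finset.Ico (k*s) ((k+1)*s)).card := by
      apply Finset.card_le_card_of_injOn pos
      · intro j hj
        have := (hmemB k j).mp hj
        exact Finset.mem_Ico.mpr ⟨this.2.1, this.2.2⟩
      · intro j _ j' _ hjj
        exact hposinj j j' hjj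
    rwa [Nat.card_Ico, show (k+1)*s - k*s = s from by ring_nf; omega] at hle
  have hpart : ∀ j, j ∉ T0 → ∑ k ∈ Finset.range N, rst (B k) h j = h j := by
    intro j hj
    have hjN : pos j < N := lt_of_lt_of_le (hposlt j hj) (Nat.sub_le N s)
    have hk0mem : pos j / s ∈ Finset.range N :=
      Finset.mem_range.mpr (lt_of_le_of_lt (Nat.div_le_self _ _) hjN)
    have hmod : pos j % s < s := Nat.mod_lt _ (by omega)
    have hdm : s * (pos j / s) + pos j % s = pos j := Nat.div_add_mod (pos j) s
    have hjB : j ∈ B (pos j / s) := by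
      rw [hmemB]
      refine ⟨hj, Nat.div_mul_le_self _ _, ?_⟩
      have h3 : (pos j / s + 1)*s = s*(pos j / s) + s := by ring
      omega
    rw [Finset.sum_eq_single (pos j / s)]
    · simp [rst, hjB]
    · intro k hk hkne
      have hnot : j ∉ B k := fun hmem =>
        Finset.disjoint_left.mp (hBdisj k (pos j / s) hkne) hmem hjB
      simp [rst, hnot]
    · intro hk; exact absurd hk0mem hk
  have hN1 : 1 ≤ N := le_trans hs1 (by
    have := hT0card ▸ Finset.card_le_univ T0
    simpa using this)
  have hdecomp : h = rst (T0 ∪ B 0) h + ∑ k ∈ Finset.Ico 1 N, rst (B k) h := by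
    funext j
    simp only [Pi.add_apply, Finset.sum_apply]
    by_cases hj : j ∈ T0
    · have h1 : rst (T0 ∪ B 0) h j = h j := by simp [rst, Finset.mem_union, hj]
      have h2 : ∀ k ∈ Finset.Ico 1 N, rst (B k) h j = 0 := by
        intro k hk
        have hnot : j ∉ B k := fun hmem => ((hmemB k j).mp hmem).1 hj
        simp [rst, hnot]
      rw [h1, Finset.sum_eq_zero h2, add_zero]
    · have hsplit : ∑ k ∈ Finset.range N, rst (B k) h j
          = rst (B 0) h j + ∑ k ∈ Finset.Ico 1 N, rst (B k) h j := by
        rw [Finset.range_eq_Ico, ← Finset.sum_Ico_consecutive _ (Nat.zero_le 1) hN1]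
        congr 1
        rw [show Finset.Ico 0 1 = {0} from rfl, Finset.sum_singleton]
      have h1 : rst (T0 ∪ B 0) h j = rst (B 0) h j := by
        by_cases hj0 : j ∈ B 0 <;> simp [rst, Finset.mem_union, hj, hj0]
      rw [h1, ← hsplit, hpart j hj]
  have hdisjT0B0 : Disjoint T0 (B 0) :=
    Finset.disjoint_left.mpr fun j hj hmem => ((hmemB 0 j).mp hmem).1 hj
  have hcard01 : (T0 ∪ B 0).card ≤ 2*s := by
    calc (T0 ∪ B 0).card ≤ T0.card + (B 0).card := Finset.card_union_le _ _
      _ ≤ 2*s := by have := hcardB 0; omega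
  have hsqs : (0:ℝ) < Real.sqrt s := Real.sqrt_pos.mpr (by exact_mod_cast hs1)
  -- ===== block norm bound =====
  have hblock : ∀ k ∈ Finset.Ico 1 N,
      l2 (rst (B k) h) ≤ (∑ j ∈ B (k-1), h j) / Real.sqrt s := by
    intro k hk
    obtain ⟨hk1, hkN⟩ := Finset.mem_Ico.mp hk
    have hBprev_nn : (0:ℝ) ≤ ∑ j ∈ B (k-1), h j :=
      Finset.sum_nonneg fun j hj => (hhco j ((hmemB _ j).mp hj).1).2.1
    by_cases hBk : B k = ∅
    · have : rst (B k) h = 0 := by funext j; simp [rst, hBk]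
      rw [this, l2_zero]
      positivity
    · obtain ⟨j1, hj1⟩ := Finset.nonempty_iff_ne_empty.mpr hBk
      have hj1m := (hmemB k j1).mp hj1
      have hj1lt : pos j1 < N - s := hposlt j1 hj1m.1
      -- previous block is full
      have himg : Finset.Ico ((k-1)*s) (k*s) ⊆ (B (k-1)).image pos := by
        intro p hp
        obtain ⟨hp1, hp2⟩ := Finset.mem_Ico.mp hp
        have hks : k*s ≤ pos j1 := by
          have : (k-1+1) = k := by omega
          exact this ▸ hj1m.2.1
        have hpNs : p < N - s := by omega
        have hpN : p < N := by omega
        refine Finset.mem_image.mpr ⟨σ ⟨p, hpN⟩, ?_, ?_⟩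
        · rw [hmemB]
          have hnt : σ ⟨p, hpN⟩ ∉ T0 := by
            rw [hA ⟨p, hpN⟩]
            simp only [not_le]
            exact hpNs
          have hpp : pos (σ ⟨p, hpN⟩) = p := by simp [hpos]
          rw [hpp]
          have hkk : (k-1+1)*s = k*s := by congr 1; omega
          exact ⟨hnt, hp1, hkk ▸ hp2⟩
        · simp [hpos]
      have hprevcard : s ≤ (B (k-1)).card := by
        have hc1 : s ≤ (Finset.Ico ((k-1)*s) (k*s)).card := by
          rw [Nat.card_Ico]
          have h4 : k - 1 + 1 = k := by omega
          have h5 : (k-1+1)*s = (k-1)*s + s := by ring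
          rw [h4] at h5
          omega
        calc s ≤ (Finset.Ico ((k-1)*s) (k*s)).card := hc1
          _ ≤ ((B (k-1)).image pos).card := Finset.card_le_card himg
          _ ≤ (B (k-1)).card := Finset.card_image_le
      -- entrywise bound
      have hentry : ∀ j ∈ B k, h j ≤ (∑ j' ∈ B (k-1), h j') / (s:ℝ) := by
        intro j hj
        have hjm := (hmemB k j).mp hj
        have hjnn : 0 ≤ h j := (hhco j hjm.1).2.1
        have hle : ∀ j' ∈ B (k-1), h j ≤ h j' := by
          intro j' hj'
          have hj'm := (hmemB _ j').mp hj'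
          apply hsorted j' j hj'm.1 hjm.1
          have : (k-1+1)*s = k*s := by congr 1; omega
          omega
        rw [le_div_iff₀ (by exact_mod_cast hs1 : (0:ℝ) < (s:ℝ))]
        calc h j * s = (s:ℝ) * h j := by ring
          _ ≤ ((B (k-1)).card : ℝ) * h j := by
              apply mul_le_mul_of_nonneg_right _ hjnn
              exact_mod_cast hprevcard
          _ = ∑ _j' ∈ B (k-1), h j := by rw [Finset.sum_const, nsmul_eq_mul]
          _ ≤ ∑ j' ∈ B (k-1), h j' := Finset.sum_le_sum hle
      have hsqb : (l2 (rst (B k) h))^2 ≤ ((∑ j ∈ B (k-1), h j) / Real.sqrt s)^2 := by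
        rw [sq_l2_rst]
        have hRHS : ((∑ j ∈ B (k-1), h j) / Real.sqrt s)^2
            = ((∑ j ∈ B (k-1), h j) / s)^2 * s := by
          rw [div_pow, div_pow, Real.sq_sqrt (by positivity : (0:ℝ) ≤ (s:ℝ))]
          field_simp
        rw [hRHS]
        calc ∑ j ∈ B k, h j ^ 2 ≤ ∑ _j ∈ B k, ((∑ j' ∈ B (k-1), h j') / s)^2 := by
              apply Finset.sum_le_sum
              intro j hj
              have hjnn : 0 ≤ h j := (hhco j ((hmemB k j).mp hj).1).2.1
              exact pow_le_pow_left₀ hjnn (hentry j hj) 2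
          _ = ((B k).card : ℝ) * ((∑ j' ∈ B (k-1), h j') / s)^2 := by
              rw [Finset.sum_const, nsmul_eq_mul]
          _ ≤ (s:ℝ) * ((∑ j' ∈ B (k-1), h j') / s)^2 := by
              apply mul_le_mul_of_nonneg_right _ (sq_nonneg _)
              exact_mod_cast hcardB k
          _ = ((∑ j' ∈ B (k-1), h j') / s)^2 * s := by ring
      calc l2 (rst (B k) h) = Real.sqrt ((l2 (rst (B k) h))^2) :=
            (Real.sqrt_sq (l2_nonneg _)).symm
        _ ≤ Real.sqrt (((∑ j ∈ B (k-1), h j) / Real.sqrt s)^2) := Real.sqrt_le_sqrt hsqb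
        _ = (∑ j ∈ B (k-1), h j) / Real.sqrt s :=
            Real.sqrt_sq (div_nonneg hBprev_nn hsqs.le)
  -- total sum over blocks
  have hBnn : ∀ k, (0:ℝ) ≤ ∑ j ∈ B k, h j :=
    fun k => Finset.sum_nonneg fun j hj => (hhco j ((hmemB _ j).mp hj).1).2.1
  have htotal : ∑ k ∈ Finset.range N, ∑ j ∈ B k, h j = ∑ j ∈ T0ᶜ, h j := by
    have e1 : ∀ k, ∑ j ∈ B k, h j = ∑ j ∈ T0ᶜ, rst (B k) h j := by
      intro k
      have hsub : B k ⊆ T0ᶜ := fun j hj => Finset.mem_compl.mpr ((hmemB k j).mp hj).1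
      rw [← Finset.sum_subset hsub (fun j _ hjB => by simp [rst, hjB])]
      exact Finset.sum_congr rfl fun j hj => by simp [rst, hj]
    calc ∑ k ∈ Finset.range N, ∑ j ∈ B k, h j
        = ∑ k ∈ Finset.range N, ∑ j ∈ T0ᶜ, rst (B k) h j :=
          Finset.sum_congr rfl fun k _ => e1 k
      _ = ∑ j ∈ T0ᶜ, ∑ k ∈ Finset.range N, rst (B k) h j := Finset.sum_comm
      _ = ∑ j ∈ T0ᶜ, h j :=
          Finset.sum_congr rfl fun j hj => hpart j (Finset.mem_compl.mp hj)
  have hT0cs : ∑ j ∈ T0, |h j| ≤ Real.sqrt s * l2 (rst T0 h) := by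
    have h1 := Finset.sum_mul_sq_le_sq_mul_sq T0 (fun _ => (1:ℝ)) (fun j => |h j|)
    simp only [one_mul, one_pow] at h1
    have h2 : ∑ j ∈ T0, |h j|^2 = (l2 (rst T0 h))^2 := by
      rw [sq_l2_rst]; exact Finset.sum_congr rfl fun j _ => sq_abs _
    have h3 : (∑ _j ∈ T0, (1:ℝ)) = (s:ℝ) := by rw [Finset.sum_const, hT0card]; simp
    rw [h2, h3] at h1
    have habsnn : (0:ℝ) ≤ ∑ j ∈ T0, |h j| := Finset.sum_nonneg fun j _ => abs_nonneg _
    calc ∑ j ∈ T0, |h j| = Real.sqrt ((∑ j ∈ T0, |h j|)^2) := (Real.sqrt_sq habsnn).symm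
      _ ≤ Real.sqrt ((s:ℝ) * (l2 (rst T0 h))^2) := Real.sqrt_le_sqrt h1
      _ = Real.sqrt s * l2 (rst T0 h) := by
          rw [Real.sqrt_mul (by positivity), Real.sqrt_sq (l2_nonneg _)]
  have hSigma : ∑ k ∈ Finset.Ico 1 N, l2 (rst (B k) h) ≤ l2 (rst T0 h) := by
    have hre : ∑ k ∈ Finset.Ico 1 N, ∑ j ∈ B (k-1), h j ≤ ∑ j ∈ T0ᶜ, h j := by
      rw [← htotal, Finset.sum_Ico_eq_sum_range]
      simp only [Nat.add_sub_cancel_left]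
      exact Finset.sum_le_sum_of_subset_of_nonneg
        (Finset.range_subset_range.mpr (by omega)) (fun k _ _ => hBnn k)
    have hstep2 : ∑ j ∈ T0ᶜ, h j ≤ Real.sqrt s * l2 (rst T0 h) := by
      have e : ∑ j ∈ T0ᶜ, h j = ∑ j ∈ T0ᶜ, |h j| :=
        Finset.sum_congr rfl fun j hj =>
          (abs_of_nonneg (hhco j (Finset.mem_compl.mp hj)).2.1).symm
      rw [e]; exact le_trans hcone hT0cs
    calc ∑ k ∈ Finset.Ico 1 N, l2 (rst (B k) h)
        ≤ ∑ k ∈ Finset.Ico 1 N, (∑ j ∈ B (k-1), h j) / Real.sqrt s :=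
          Finset.sum_le_sum hblock
      _ = (∑ k ∈ Finset.Ico 1 N, ∑ j ∈ B (k-1), h j) / Real.sqrt s := by
          rw [Finset.sum_div]
      _ ≤ (Real.sqrt s * l2 (rst T0 h)) / Real.sqrt s := by
          gcongr
          exact le_trans hre hstep2
      _ = l2 (rst T0 h) := by field_simp
  -- ===== BRIP applications =====
  have hBRIPrst : ∀ A : Finset (Fin N), A.card ≤ 2*s →
      (1-δ)*(l2 (rst A h))^2 ≤ (l2 (Φ.mulVec (rst A h)))^2 ∧
      (l2 (Φ.mulVec (rst A h)))^2 ≤ (1+δ)*(l2 (rst A h))^2 := by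
    intro A hA
    apply hBRIP
    · have hsub : Function.support (rst A h) ⊆ ↑A := by
        intro j hj
        by_contra hmem
        have hmem' : j ∉ A := fun hc => hmem (Finset.mem_coe.mpr hc)
        refine hj ?_
        show (if j ∈ A then h j else 0) = 0
        rw [if_neg hmem']
      calc Set.ncard (Function.support (rst A h)) ≤ Set.ncard (↑A : Set (Fin N)) :=
            Set.ncard_le_ncard hsub A.finite_toSet
        _ = A.card := Set.ncard_coe_finset _
        _ ≤ 2*s := hA
    · intro i
      by_cases hi : i ∈ A
      · simpa [rst, hi] using habs1 i
      · simp [rst, hi]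
  have hΦh2ε : l2 (Φ.mulVec h) ≤ 2*ε := by
    have heq : Φ.mulVec h = (Φ.mulVec xstar - y) + n := by
      rw [hh, Matrix.mulVec_sub, hy]
      abel
    rw [heq]
    calc l2 ((Φ.mulVec xstar - y) + n) ≤ l2 (Φ.mulVec xstar - y) + l2 n := l2_add_le _ _
      _ ≤ 2*ε := by linarith [hfeas.1, hn]
  set h01 := rst (T0 ∪ B 0) h with hh01
  have hsq01 : (l2 (rst T0 h))^2 + (l2 (rst (B 0) h))^2 = (l2 h01)^2 := by
    rw [hh01, sq_l2_rst, sq_l2_rst, sq_l2_rst, Finset.sum_union hdisjT0B0]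
  have hipid : (l2 (Φ.mulVec h01))^2 = ip (Φ.mulVec h01) (Φ.mulVec h)
      - ∑ k ∈ Finset.Ico 1 N, ip (Φ.mulVec h01) (Φ.mulVec (rst (B k) h)) := by
    have hmv : Φ.mulVec h = Φ.mulVec h01 + ∑ k ∈ Finset.Ico 1 N, Φ.mulVec (rst (B k) h) := by
      conv_lhs => rw [hdecomp]
      rw [Matrix.mulVec_add]
      congr 1
      simp only [← Matrix.mulVecLin_apply]
      exact map_sum _ _ _
    have e : ip (Φ.mulVec h01) (Φ.mulVec h) = (l2 (Φ.mulVec h01))^2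
        + ∑ k ∈ Finset.Ico 1 N, ip (Φ.mulVec h01) (Φ.mulVec (rst (B k) h)) := by
      rw [hmv, ip_add_right, ip_sum_right, ip_self]
    linarith [e]
  have hub : l2 (Φ.mulVec h01) ≤ Real.sqrt (1+δ) * l2 h01 := by
    have h1 := (hBRIPrst (T0 ∪ B 0) hcard01).2
    calc l2 (Φ.mulVec h01) = Real.sqrt ((l2 (Φ.mulVec h01))^2) :=
          (Real.sqrt_sq (l2_nonneg _)).symm
      _ ≤ Real.sqrt ((1+δ) * (l2 h01)^2) := Real.sqrt_le_sqrt h1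
      _ = Real.sqrt (1+δ) * l2 h01 := by
          rw [Real.sqrt_mul (by linarith), Real.sqrt_sq (l2_nonneg _)]
  have hA4 : ip (Φ.mulVec h01) (Φ.mulVec h) ≤ Real.sqrt (1+δ) * l2 h01 * (2*ε) := by
    calc ip (Φ.mulVec h01) (Φ.mulVec h) ≤ |ip (Φ.mulVec h01) (Φ.mulVec h)| := le_abs_self _
      _ ≤ l2 (Φ.mulVec h01) * l2 (Φ.mulVec h) := abs_ip_le _ _
      _ ≤ (Real.sqrt (1+δ) * l2 h01) * (2*ε) :=
          mul_le_mul hub hΦh2ε (l2_nonneg _)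
            (mul_nonneg (Real.sqrt_nonneg _) (l2_nonneg _))
  have hcross : ∀ k ∈ Finset.Ico 1 N, -(ip (Φ.mulVec h01) (Φ.mulVec (rst (B k) h)))
      ≤ δ * ((l2 (rst T0 h) + l2 (rst (B 0) h)) * l2 (rst (B k) h)) := by
    intro k hk
    have hk1 := (Finset.mem_Ico.mp hk).1
    have hd1 : Disjoint T0 (B k) :=
      Finset.disjoint_left.mpr fun j hj hm => ((hmemB k j).mp hm).1 hj
    have hd2 : Disjoint (B 0) (B k) := hBdisj 0 k (by omega)
    have hc1 := cross_bound Φ δ hBRIP (rst T0 h) (rst (B k) h) T0 (B k)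
        (fun j hj => by simp [rst, hj]) (fun j hj => by simp [rst, hj]) hd1
        (by rw [hT0card]; have := hcardB k; omega)
    have hc2 := cross_bound Φ δ hBRIP (rst (B 0) h) (rst (B k) h) (B 0) (B k)
        (fun j hj => by simp [rst, hj]) (fun j hj => by simp [rst, hj]) hd2
        (by have := hcardB 0; have := hcardB k; omega)
    have hexp : ip (Φ.mulVec h01) (Φ.mulVec (rst (B k) h))
        = ip (Φ.mulVec (rst T0 h)) (Φ.mulVec (rst (B k) h))
          + ip (Φ.mulVec (rst (B 0) h)) (Φ.mulVec (rst (B k) h)) := by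
      rw [hh01, rst_union hdisjT0B0, Matrix.mulVec_add, ip_add_left]
    rw [hexp]
    have ha1 := (abs_le.mp hc1).1
    have ha2 := (abs_le.mp hc2).1
    nlinarith [ha1, ha2]
  have hcrosssum : -(∑ k ∈ Finset.Ico 1 N, ip (Φ.mulVec h01) (Φ.mulVec (rst (B k) h)))
      ≤ δ * ((l2 (rst T0 h) + l2 (rst (B 0) h)) * l2 (rst T0 h)) := by
    have habnn : 0 ≤ l2 (rst T0 h) + l2 (rst (B 0) h) :=
      add_nonneg (l2_nonneg _) (l2_nonneg _)
    calc -(∑ k ∈ Finset.Ico 1 N, ip (Φ.mulVec h01) (Φ.mulVec (rst (B k) h)))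
        = ∑ k ∈ Finset.Ico 1 N, -(ip (Φ.mulVec h01) (Φ.mulVec (rst (B k) h))) := by
          rw [Finset.sum_neg_distrib]
      _ ≤ ∑ k ∈ Finset.Ico 1 N,
            δ * ((l2 (rst T0 h) + l2 (rst (B 0) h)) * l2 (rst (B k) h)) :=
          Finset.sum_le_sum hcross
      _ = δ * (l2 (rst T0 h) + l2 (rst (B 0) h)) * ∑ k ∈ Finset.Ico 1 N, l2 (rst (B k) h) := by
          rw [Finset.mul_sum]
          exact Finset.sum_congr rfl fun k _ => by ring
      _ ≤ δ * (l2 (rst T0 h) + l2 (rst (B 0) h)) * l2 (rst T0 h) :=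
          mul_le_mul_of_nonneg_left hSigma (mul_nonneg hδ0 habnn)
      _ = δ * ((l2 (rst T0 h) + l2 (rst (B 0) h)) * l2 (rst T0 h)) := by ring
  -- ===== assemble the main inequality =====
  have han : l2 (rst T0 h) ≤ l2 h01 := by
    nlinarith [hsq01, sq_nonneg (l2 (rst (B 0) h)), l2_nonneg (rst T0 h), l2_nonneg h01]
  have habn : l2 (rst T0 h) + l2 (rst (B 0) h) ≤ Real.sqrt 2 * l2 h01 := by
    have hsq : (l2 (rst T0 h) + l2 (rst (B 0) h))^2 ≤ (Real.sqrt 2 * l2 h01)^2 := by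
      rw [mul_pow, hsq2]
      nlinarith [sq_nonneg (l2 (rst T0 h) - l2 (rst (B 0) h)), hsq01]
    calc l2 (rst T0 h) + l2 (rst (B 0) h)
        = Real.sqrt ((l2 (rst T0 h) + l2 (rst (B 0) h))^2) :=
          (Real.sqrt_sq (add_nonneg (l2_nonneg _) (l2_nonneg _))).symm
      _ ≤ Real.sqrt ((Real.sqrt 2 * l2 h01)^2) := Real.sqrt_le_sqrt hsq
      _ = Real.sqrt 2 * l2 h01 :=
          Real.sqrt_sq (mul_nonneg (Real.sqrt_nonneg _) (l2_nonneg _))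
  have hmain : (1 - (Real.sqrt 2 + 1)*δ) * (l2 h01)^2
      ≤ 2*Real.sqrt (1+δ)*ε*(l2 h01) := by
    have hlow := (hBRIPrst (T0 ∪ B 0) hcard01).1
    rw [hipid] at hlow
    have h5 : δ * ((l2 (rst T0 h) + l2 (rst (B 0) h)) * l2 (rst T0 h))
        ≤ δ * (Real.sqrt 2 * l2 h01 * l2 h01) := by
      apply mul_le_mul_of_nonneg_left _ hδ0
      exact mul_le_mul habn han (l2_nonneg _)
        (mul_nonneg (Real.sqrt_nonneg _) (l2_nonneg _))
    nlinarith [hlow, hA4, hcrosssum, h5]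
  have hn01C : l2 h01 ≤ C*ε/2 := by
    have hKnn : (0:ℝ) ≤ 2*Real.sqrt (1+δ)*ε := by positivity
    have hCε : C*ε/2 = 2*Real.sqrt (1+δ)*ε/(1 - (Real.sqrt 2 + 1)*δ) := by
      rw [hC]; field_simp; ring
    rw [hCε, le_div_iff₀ hDpos]
    rcases eq_or_lt_of_le (l2_nonneg h01) with heq | hpos
    · rw [← heq]; simpa using hKnn
    · nlinarith [hmain, hpos]
  -- ===== ℓ∞ bound =====
  have hinf : ∀ j, |h j| ≤ l2 h01 := by
    intro j
    by_cases hj : j ∈ T0 ∪ B 0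
    · have e : |h j| = |h01 j| := by simp [hh01, rst, hj]
      rw [e]; exact abs_le_l2 _ j
    · rw [Finset.mem_union] at hj
      push_neg at hj
      have hjT0 : j ∉ T0 := hj.1
      have hposj : s ≤ pos j := by
        by_contra hlt
        push_neg at hlt
        exact hj.2 ((hmemB 0 j).mpr ⟨hjT0, by omega, by omega⟩)
      have hjNs : pos j < N - s := hposlt j hjT0
      have h0N : (0:ℕ) < N := by omega
      have hj'T0 : σ ⟨0, h0N⟩ ∉ T0 := by
        rw [hA ⟨0, h0N⟩]
        simp only [not_le]
        omega
      have hposj' : pos (σ ⟨0, h0N⟩) = 0 := by simp [hpos]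
      have hj'B0 : σ ⟨0, h0N⟩ ∈ B 0 := (hmemB 0 _).mpr ⟨hj'T0, by omega, by omega⟩
      have hle : h j ≤ h (σ ⟨0, h0N⟩) := hsorted _ j hj'T0 hjT0 (by omega)
      have h0j : 0 ≤ h j := (hhco j hjT0).2.1
      have h0j' : 0 ≤ h (σ ⟨0, h0N⟩) := (hhco _ hj'T0).2.1
      calc |h j| = h j := abs_of_nonneg h0j
        _ ≤ h (σ ⟨0, h0N⟩) := hle
        _ = |h (σ ⟨0, h0N⟩)| := (abs_of_nonneg h0j').symm
        _ = |h01 (σ ⟨0, h0N⟩)| := by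
            simp [hh01, rst, Finset.mem_union, hj'B0]
        _ ≤ l2 h01 := abs_le_l2 _ _
  -- ===== conclusion =====
  funext j
  have hhalf : |h j| < 1/2 := by
    have := le_trans (hinf j) hn01C
    linarith [this, hthresh]
  have hj2 := abs_lt.mp hhalf
  have hje : h j = xstar j - xtrue j := by simp [hh]
  rcases hbin j with h0 | h0
  · have : xstar j < 1/2 := by rw [hje, h0] at hj2; linarith [hj2.2]
    rw [h0, if_neg (not_lt.mpr this.le)]
  · have : 1/2 < xstar j := by rw [hje, h0] at hj2; linarith [hj2.1]
    rw [h0, if_pos this]
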